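/- arXiv:2203.01758 — 2 statements merged into one kernel-verified Lean document; each statement's English description precedes it below -/
import Mathlib

section
/- Let l ∈ ℝⁿ, n ≥ 1 and ρ ≥ 0, and let P_{n,ρ} = { p ∈ Δₙ : n‖p‖₂² ≤ 2ρ + 1 } be the χ²-ball around the uniform distribution. Then min_{p ∈ P_{n,ρ}} pᵀl satisfies max{ √(2ρ s²ₙ) − 2Mρ, 0 } ≤ (1/n)∑ᵢ lᵢ − min_{p ∈ P_{n,ρ}} pᵀl ≤ √(2ρ s²ₙ), where s²ₙ = (1/n)∑ᵢ(lᵢ − l̄)² is the empirical variance of l and M = max lᵢ − min lᵢ. -/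
/-- The set of values `pᵀ l` as `p` ranges over the χ²-ball
`P_{n,ρ} = { p ∈ Δₙ : n‖p‖₂² ≤ 2ρ + 1 }` around the uniform distribution (here with `n + 1`
coordinates, encoding `n ≥ 1`). -/
def chiSqBallValues (n : ℕ) (ρ : ℝ) (l : Fin (n + 1) → ℝ) : Set ℝ :=
  {v | ∃ p : Fin (n + 1) → ℝ, (∀ i, 0 ≤ p i) ∧ ∑ i, p i = 1 ∧
    ((n : ℝ) + 1) * ∑ i, (p i) ^ 2 ≤ 2 * ρ + 1 ∧ v = ∑ i, p i * l i}

/-- The empirical mean `l̄ = (1/n)∑ᵢ lᵢ`. -/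
noncomputable def empMean (n : ℕ) (l : Fin (n + 1) → ℝ) : ℝ :=
  (∑ i, l i) / ((n : ℝ) + 1)

/-- The empirical variance `s²ₙ = (1/n)∑ᵢ (lᵢ − l̄)²`. -/
noncomputable def empVar (n : ℕ) (l : Fin (n + 1) → ℝ) : ℝ :=
  (∑ i, (l i - empMean n l) ^ 2) / ((n : ℝ) + 1)

/-- The range `M = max lᵢ − min lᵢ`. -/
noncomputable def empRange (n : ℕ) (l : Fin (n + 1) → ℝ) : ℝ :=
  Finset.univ.sup' Finset.univ_nonempty l - Finset.univ.inf' Finset.univ_nonempty l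

lemma aux_sum_sub_mean (n : ℕ) (l : Fin (n + 1) → ℝ) :
    ∑ i, (l i - empMean n l) = 0 := by
  have hN : ((n : ℝ) + 1) ≠ 0 := by positivity
  rw [Finset.sum_sub_distrib, Finset.sum_const, Finset.card_univ, Fintype.card_fin]
  rw [nsmul_eq_mul, empMean]
  push_cast
  field_simp
  ring

lemma aux_var_sum (n : ℕ) (l : Fin (n + 1) → ℝ) :
    ∑ i, (l i - empMean n l) ^ 2 = ((n : ℝ) + 1) * empVar n l := by
  have hN : ((n : ℝ) + 1) ≠ 0 := by positivity
  rw [empVar]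
  field_simp

lemma aux_abs_le_range (n : ℕ) (l : Fin (n + 1) → ℝ) (i : Fin (n + 1)) :
    |l i - empMean n l| ≤ empRange n l := by
  have hN : (0 : ℝ) < (n : ℝ) + 1 := by positivity
  set S := Finset.univ.sup' Finset.univ_nonempty l with hS
  set I := Finset.univ.inf' Finset.univ_nonempty l with hI
  have hsup : ∀ j, l j ≤ S := fun j => Finset.le_sup' l (Finset.mem_univ j)
  have hinf : ∀ j, I ≤ l j := fun j => Finset.inf'_le l (Finset.mem_univ j)
  have hmean_le : empMean n l ≤ S := by
    rw [empMean, div_le_iff₀ hN]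
    calc ∑ j, l j ≤ ∑ _j : Fin (n + 1), S := Finset.sum_le_sum fun j _ => hsup j
      _ = S * ((n : ℝ) + 1) := by
          rw [Finset.sum_const, Finset.card_univ, Fintype.card_fin, nsmul_eq_mul]
          push_cast; ring
  have hmean_ge : I ≤ empMean n l := by
    rw [empMean, le_div_iff₀ hN]
    calc I * ((n : ℝ) + 1) = ∑ _j : Fin (n + 1), I := by
          rw [Finset.sum_const, Finset.card_univ, Fintype.card_fin, nsmul_eq_mul]
          push_cast; ring
      _ ≤ ∑ j, l j := Finset.sum_le_sum fun j _ => hinf j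
  rw [abs_le, empRange, ← hS, ← hI]
  constructor
  · linarith [hinf i, hmean_le]
  · linarith [hsup i, hmean_ge]

/-- Let `l ∈ ℝⁿ` (with `n ≥ 1`) and `ρ ≥ 0`, and let
`P_{n,ρ} = { p ∈ Δₙ : n‖p‖₂² ≤ 2ρ + 1 }` be the χ²-ball around the uniform distribution. Then
`max{ √(2ρ s²ₙ) − 2Mρ, 0 } ≤ (1/n)∑ᵢ lᵢ − min_{p ∈ P_{n,ρ}} pᵀl ≤ √(2ρ s²ₙ)`,
where `s²ₙ` is the empirical variance of `l` and `M = max lᵢ − min lᵢ`. -/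
theorem stmt_9 (n : ℕ) (ρ : ℝ) (hρ : 0 ≤ ρ) (l : Fin (n + 1) → ℝ) :
    max (Real.sqrt (2 * ρ * empVar n l) - 2 * empRange n l * ρ) 0
        ≤ empMean n l - sInf (chiSqBallValues n ρ l) ∧
      empMean n l - sInf (chiSqBallValues n ρ l) ≤ Real.sqrt (2 * ρ * empVar n l) := by
  have hN : (0 : ℝ) < (n : ℝ) + 1 := by positivity
  set N : ℝ := (n : ℝ) + 1 with hNdef
  set lb := empMean n l with hlb
  set s2 := empVar n l with hs2def
  set M := empRange n l with hMdef
  have hsum0 : ∑ i, (l i - lb) = 0 := aux_sum_sub_mean n l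
  have hT : ∑ i, (l i - lb) ^ 2 = N * s2 := aux_var_sum n l
  have hT0 : (0 : ℝ) ≤ ∑ i, (l i - lb) ^ 2 := Finset.sum_nonneg fun i _ => sq_nonneg _
  have hs2 : 0 ≤ s2 := by
    have := hT0; rw [hT] at this; nlinarith
  have habs : ∀ i, |l i - lb| ≤ M := aux_abs_le_range n l
  have hM0 : 0 ≤ M := le_trans (abs_nonneg _) (habs 0)
  clear_value N lb s2 M
  -- uniform distribution gives the mean
  have hmemU : lb ∈ chiSqBallValues n ρ l := by
    refine ⟨fun _ => 1 / N, fun i => by positivity, ?_, ?_, ?_⟩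
    · rw [Finset.sum_const, Finset.card_univ, Fintype.card_fin, nsmul_eq_mul, hNdef]
      push_cast; field_simp
    · rw [Finset.sum_const, Finset.card_univ, Fintype.card_fin, nsmul_eq_mul]
      push_cast
      have : ((n : ℝ) + 1) * (((n : ℝ) + 1) * (1 / N) ^ 2) = 1 := by
        rw [hNdef]; field_simp
      rw [this]; linarith
    · rw [← Finset.mul_sum, hlb, empMean, hNdef]
      field_simp
  have hne : (chiSqBallValues n ρ l).Nonempty := ⟨lb, hmemU⟩
  -- every member is at least `lb - √(2ρ s²)`  (Cauchy–Schwarz)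
  have hlbmem : ∀ v ∈ chiSqBallValues n ρ l, lb - Real.sqrt (2 * ρ * s2) ≤ v := by
    rintro v ⟨p, hp0, hp1, hp2, hv⟩
    have cs := Finset.sum_mul_sq_le_sq_mul_sq Finset.univ
      (fun i => 1 / N - p i) (fun i => l i - lb)
    have e1 : ∑ i, (1 / N - p i) * (l i - lb) = lb - v := by
      have he : ∀ i, (1 / N - p i) * (l i - lb)
          = (1 / N) * (l i - lb) - p i * l i + lb * p i := by intro i; ring
      rw [Finset.sum_congr rfl fun i _ => he i, Finset.sum_add_distrib,
        Finset.sum_sub_distrib, ← Finset.mul_sum, ← Finset.mul_sum, hsum0, hp1, hv]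
      ring
    have e2 : ∑ i, (1 / N - p i) ^ 2 = ∑ i, (p i) ^ 2 - 1 / N := by
      have he : ∀ i, (1 / N - p i) ^ 2
          = (1 / N) ^ 2 - (2 / N) * p i + (p i) ^ 2 := by
        intro i; field_simp; ring
      rw [Finset.sum_congr rfl fun i _ => he i, Finset.sum_add_distrib,
        Finset.sum_sub_distrib, ← Finset.mul_sum, hp1, Finset.sum_const,
        Finset.card_univ, Fintype.card_fin, nsmul_eq_mul]
      push_cast
      rw [hNdef]
      field_simp
      ring
    have e3 : ∑ i, (p i) ^ 2 - 1 / N ≤ 2 * ρ / N := by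
      rw [sub_le_iff_le_add, ← add_div, le_div_iff₀ hN]
      nlinarith [hp2]
    rw [e1, e2, hT] at cs
    have h4 : (lb - v) ^ 2 ≤ 2 * ρ * s2 := by
      calc (lb - v) ^ 2 ≤ (∑ i, (p i) ^ 2 - 1 / N) * (N * s2) := cs
        _ ≤ (2 * ρ / N) * (N * s2) :=
            mul_le_mul_of_nonneg_right e3 (mul_nonneg hN.le hs2)
        _ = 2 * ρ * s2 := by field_simp
    have h5 : lb - v ≤ Real.sqrt (2 * ρ * s2) := by
      calc lb - v ≤ |lb - v| := le_abs_self _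
        _ = Real.sqrt ((lb - v) ^ 2) := (Real.sqrt_sq_eq_abs _).symm
        _ ≤ Real.sqrt (2 * ρ * s2) := Real.sqrt_le_sqrt h4
    linarith
  have hbdd : BddBelow (chiSqBallValues n ρ l) :=
    ⟨lb - Real.sqrt (2 * ρ * s2), fun v hv => hlbmem v hv⟩
  have hInf_le : sInf (chiSqBallValues n ρ l) ≤ lb := csInf_le hbdd hmemU
  have hInf_ge : lb - Real.sqrt (2 * ρ * s2) ≤ sInf (chiSqBallValues n ρ l) :=
    le_csInf hne hlbmem
  refine ⟨max_le ?_ (by linarith), by linarith⟩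
  -- the hard part: √(2ρ s²) − 2Mρ ≤ lb − sInf
  by_cases hs2pos : s2 = 0
  · rw [hs2pos]
    simp only [mul_zero, Real.sqrt_zero, zero_sub]
    nlinarith [hInf_le]
  have hs2' : 0 < s2 := lt_of_le_of_ne hs2 (Ne.symm hs2pos)
  have hMpos : 0 < M := by
    rcases lt_or_ge 0 M with h | h
    · exact h
    · exfalso
      apply hs2pos
      have hz : ∀ i, l i - lb = 0 := fun i =>
        abs_nonpos_iff.mp (le_trans (habs i) h)
      have hTz : ∑ i, (l i - lb) ^ 2 = 0 :=
        Finset.sum_eq_zero fun i _ => by rw [hz i]; ring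
      rw [hT] at hTz
      nlinarith
  set d := min (Real.sqrt (2 * ρ / s2)) (1 / M) with hd
  have hd0 : 0 ≤ d := le_min (Real.sqrt_nonneg _) (by positivity)
  have hdM : d * M ≤ 1 := by
    have := min_le_right (Real.sqrt (2 * ρ / s2)) (1 / M)
    calc d * M ≤ (1 / M) * M := mul_le_mul_of_nonneg_right this hM0
      _ = 1 := by field_simp
  have hd2 : d ^ 2 * s2 ≤ 2 * ρ := by
    have h1 : d ^ 2 ≤ (Real.sqrt (2 * ρ / s2)) ^ 2 :=
      pow_le_pow_left₀ hd0 (min_le_left _ _) 2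
    rw [Real.sq_sqrt (by positivity)] at h1
    calc d ^ 2 * s2 ≤ (2 * ρ / s2) * s2 := mul_le_mul_of_nonneg_right h1 hs2'.le
      _ = 2 * ρ := by field_simp
  clear_value d
  -- the feasible distribution tilted in the direction of `-(l - lb)`
  have hNne : N ≠ 0 := hN.ne'
  have hfeas : lb - d * s2 ∈ chiSqBallValues n ρ l := by
    refine ⟨fun i => (1 - d * (l i - lb)) / N, ?_, ?_, ?_, ?_⟩
    · intro i
      apply div_nonneg _ hN.le
      have h1 : d * (l i - lb) ≤ d * M :=
        mul_le_mul_of_nonneg_left (le_trans (le_abs_self _) (habs i)) hd0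
      linarith [hdM]
    · have h1 : ∑ i, (1 - d * (l i - lb)) = N := by
        rw [Finset.sum_sub_distrib, ← Finset.mul_sum, hsum0, Finset.sum_const,
          Finset.card_univ, Fintype.card_fin, nsmul_eq_mul, hNdef]
        push_cast; ring
      rw [← Finset.sum_div, h1, div_self hNne]
    · have h2 : ∑ i, (1 - d * (l i - lb)) ^ 2 = N * (1 + d ^ 2 * s2) := by
        have he : ∀ i, (1 - d * (l i - lb)) ^ 2
            = 1 - (2 * d) * (l i - lb) + d ^ 2 * (l i - lb) ^ 2 := fun i => by ring
        rw [Finset.sum_congr rfl fun i _ => he i, Finset.sum_add_distrib,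
          Finset.sum_sub_distrib, ← Finset.mul_sum, ← Finset.mul_sum, hsum0, hT,
          Finset.sum_const, Finset.card_univ, Fintype.card_fin, nsmul_eq_mul, hNdef]
        push_cast; ring
      have h3 : ∑ i, ((1 - d * (l i - lb)) / N) ^ 2
          = (∑ i, (1 - d * (l i - lb)) ^ 2) / N ^ 2 := by
        rw [Finset.sum_div]
        exact Finset.sum_congr rfl fun i _ => by rw [div_pow]
      have h4 : ((n : ℝ) + 1) = N := hNdef.symm
      rw [h4, h3, h2]
      have h5 : N * (N * (1 + d ^ 2 * s2) / N ^ 2) = 1 + d ^ 2 * s2 := by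
        field_simp
      rw [h5]
      linarith [hd2]
    · have h6 : ∑ i, (1 - d * (l i - lb)) * l i = N * lb - d * (N * s2) := by
        have he : ∀ i, (1 - d * (l i - lb)) * l i
            = l i - d * ((l i - lb) ^ 2 + lb * (l i - lb)) := fun i => by ring
        rw [Finset.sum_congr rfl fun i _ => he i, Finset.sum_sub_distrib,
          ← Finset.mul_sum, Finset.sum_add_distrib, ← Finset.mul_sum, hsum0, hT]
        have h7 : ∑ i, l i = N * lb := by
          rw [hlb, empMean, hNdef]; field_simp
        rw [h7]; ring
      have h8 : ∑ i, ((1 - d * (l i - lb)) / N) * l i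
          = (∑ i, (1 - d * (l i - lb)) * l i) / N := by
        rw [Finset.sum_div]
        exact Finset.sum_congr rfl fun i _ => by ring
      rw [h8, h6]
      field_simp
  have hInf_le2 : sInf (chiSqBallValues n ρ l) ≤ lb - d * s2 := csInf_le hbdd hfeas
  -- final arithmetic: √(2ρ s²) − 2Mρ ≤ d s²
  have harith : Real.sqrt (2 * ρ * s2) - 2 * M * ρ ≤ d * s2 := by
    rcases le_total (Real.sqrt (2 * ρ / s2)) (1 / M) with h | h
    · have hdeq : d = Real.sqrt (2 * ρ / s2) := hd.trans (min_eq_left h)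
      have : d * s2 = Real.sqrt (2 * ρ * s2) := by
        rw [hdeq]
        calc Real.sqrt (2 * ρ / s2) * s2
            = Real.sqrt (2 * ρ / s2) * Real.sqrt (s2 ^ 2) := by
              rw [Real.sqrt_sq hs2'.le]
          _ = Real.sqrt ((2 * ρ / s2) * s2 ^ 2) := (Real.sqrt_mul (by positivity) _).symm
          _ = Real.sqrt (2 * ρ * s2) := by
              congr 1; field_simp
      rw [this]
      nlinarith
    · have hdeq : d = 1 / M := hd.trans (min_eq_right h)
      have key : 2 * ρ * s2 ≤ (s2 / M + 2 * M * ρ) ^ 2 := by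
        have habprod : (s2 / M) * (2 * M * ρ) = 2 * ρ * s2 := by field_simp
        nlinarith [sq_nonneg (s2 / M - 2 * M * ρ), mul_pos (div_pos hs2' hMpos)
          hMpos, mul_nonneg hρ hs2'.le]
      have hpos : 0 ≤ s2 / M + 2 * M * ρ := by positivity
      have : Real.sqrt (2 * ρ * s2) ≤ s2 / M + 2 * M * ρ := by
        calc Real.sqrt (2 * ρ * s2) ≤ Real.sqrt ((s2 / M + 2 * M * ρ) ^ 2) :=
              Real.sqrt_le_sqrt key
          _ = s2 / M + 2 * M * ρ := Real.sqrt_sq hpos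
      have hds : d * s2 = s2 / M := by rw [hdeq]; field_simp
      linarith [hds ▸ this]
  linarith [hInf_le2, harith]
end

section
/- Let 𝓕 be an RKHS with kernel bounded by sup_{x,y} k(x,y) ≤ B, and let X₁, …, Xₙ be i.i.d. samples from a probability measure P. Then the expected MMD between the empirical measure and P satisfies E[ MMD( (1/n)∑ᵢδ_{Xᵢ}, P; 𝓕 ) ] ≤ 2√(B/n). -/
open MeasureTheory ProbabilityTheory

/-- Let `𝓕` be an RKHS with feature map `φ` and kernel
`k(x,y) = ⟪φ(x), φ(y)⟫` bounded by `sup_{x,y} k(x,y) ≤ B`, and let `X₁, …, Xₙ` be i.i.d.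
samples from a probability measure `P`. Then the expected MMD between the empirical measure
and `P` satisfies
`E[ MMD((1/n)∑ᵢ δ_{Xᵢ}, P; 𝓕) ] ≤ 2√(B/n)`,
where `MMD(Q, P; 𝓕) = ‖ψ_Q − ψ_P‖` is the norm distance of the kernel mean embeddings. -/
theorem stmt_15 {𝒳 H : Type*} [MeasurableSpace 𝒳]
    [NormedAddCommGroup H] [InnerProductSpace ℝ H] [CompleteSpace H]
    {Ω : Type*} [MeasurableSpace Ω] (Pr : Measure Ω) [IsProbabilityMeasure Pr]
    (P : Measure 𝒳) [IsProbabilityMeasure P]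
    (φ : 𝒳 → H) (B : ℝ)
    (hk : ∀ x y : 𝒳, (inner ℝ (φ x) (φ y) : ℝ) ≤ B)
    (n : ℕ) (hn : 0 < n)
    (X : Fin n → Ω → 𝒳) (hmeas : ∀ i, Measurable (X i))
    (hiid : iIndepFun X Pr)
    (hdist : ∀ i, Measure.map (X i) Pr = P)
    (hint : Integrable φ P) :
    (∫ ω, ‖(n : ℝ)⁻¹ • ∑ i, φ (X i ω) - ∫ x, φ x ∂P‖ ∂Pr)
      ≤ 2 * Real.sqrt (B / n) := by
  classical
  -- basic facts
  have hne : Nonempty 𝒳 := by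
    by_contra h
    rw [not_nonempty_iff] at h
    have h1 : P Set.univ = 1 := measure_univ
    rw [Set.univ_eq_empty_iff.2 h, measure_empty] at h1
    exact zero_ne_one h1
  have hB : 0 ≤ B := le_trans real_inner_self_nonneg (hk (Classical.arbitrary 𝒳) _)
  set C := Real.sqrt B with hC
  have hCsq : C ^ 2 = B := Real.sq_sqrt hB
  have hC0 : 0 ≤ C := Real.sqrt_nonneg B
  have hφbd : ∀ x, ‖φ x‖ ≤ C := by
    intro x
    have h1 : ‖φ x‖ ^ 2 ≤ B := by
      rw [← real_inner_self_eq_norm_sq]; exact hk x x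
    calc ‖φ x‖ = Real.sqrt (‖φ x‖ ^ 2) := (Real.sqrt_sq (norm_nonneg _)).symm
    _ ≤ C := Real.sqrt_le_sqrt h1
  obtain ⟨g, hg, hfg⟩ := hint.1
  set μH := ∫ x, φ x ∂P with hμH
  have hμbd : ‖μH‖ ≤ C := by
    calc ‖μH‖ ≤ ∫ x, ‖φ x‖ ∂P := norm_integral_le_integral_norm _
    _ ≤ ∫ _x, C ∂P := integral_mono hint.norm (integrable_const _) fun x => hφbd x
    _ = C := by simp
  have hgbd : ∀ᵐ x ∂P, ‖g x‖ ≤ C := hfg.mono fun x hx => by rw [← hx]; exact hφbd x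
  have hgint : Integrable g P := hint.congr hfg
  have hgI : ∫ x, g x ∂P = μH := (integral_congr_ae hfg).symm
  -- centered variables
  set Y : Fin n → Ω → H := fun i ω => g (X i ω) - μH with hY
  have hYsm : ∀ i, StronglyMeasurable (Y i) := fun i =>
    (hg.comp_measurable (hmeas i)).sub stronglyMeasurable_const
  have hgXbd : ∀ i, ∀ᵐ ω ∂Pr, ‖g (X i ω)‖ ≤ C := fun i => by
    have h : ∀ᵐ y ∂(Measure.map (X i) Pr), ‖g y‖ ≤ C := by rw [hdist i]; exact hgbd
    exact ae_of_ae_map (hmeas i).aemeasurable h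
  have hYbd : ∀ i, ∀ᵐ ω ∂Pr, ‖Y i ω‖ ≤ 2 * C := fun i =>
    (hgXbd i).mono fun ω hω => by
      calc ‖Y i ω‖ ≤ ‖g (X i ω)‖ + ‖μH‖ := norm_sub_le _ _
      _ ≤ C + C := add_le_add hω hμbd
      _ = 2 * C := by ring
  have hYint : ∀ i, Integrable (Y i) Pr := fun i =>
    (integrable_const (2 * C)).mono' (hYsm i).aestronglyMeasurable (hYbd i)
  have hgXint : ∀ i, Integrable (fun ω => g (X i ω)) Pr := fun i =>
    (integrable_const C).mono'
      (hg.comp_measurable (hmeas i)).aestronglyMeasurable (hgXbd i)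
  have hYmean : ∀ i, ∫ ω, Y i ω ∂Pr = 0 := by
    intro i
    have h1 : ∫ ω, g (X i ω) ∂Pr = μH := by
      rw [← hgI, ← hdist i, integral_map (hmeas i).aemeasurable]
      rw [hdist i]; exact hg.aestronglyMeasurable
    rw [hY]
    simp only [integral_sub (hgXint i) (integrable_const _), h1, integral_const,
      measure_univ, ENNReal.toReal_one, probReal_univ, one_smul, sub_self]
  -- integrability of inner products
  have hIPint : ∀ i j, Integrable (fun ω => (inner ℝ (Y i ω) (Y j ω) : ℝ)) Pr := by
    intro i j
    refine (integrable_const ((2 * C) * (2 * C))).mono'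
      ((hYsm i).inner (hYsm j)).aestronglyMeasurable ?_
    filter_upwards [hYbd i, hYbd j] with ω h1 h2
    calc ‖(inner ℝ (Y i ω) (Y j ω) : ℝ)‖ ≤ ‖Y i ω‖ * ‖Y j ω‖ := norm_inner_le_norm _ _
    _ ≤ (2 * C) * (2 * C) :=
      mul_le_mul h1 h2 (norm_nonneg _) (by positivity)
  -- cross terms vanish
  have hcross : ∀ i j, i ≠ j → ∫ ω, (inner ℝ (Y i ω) (Y j ω) : ℝ) ∂Pr = 0 := by
    intro i j hij
    have hindep : IndepFun (X i) (X j) Pr := hiid.indepFun hij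
    have hmap : Measure.map (fun ω => (X i ω, X j ω)) Pr = P.prod P := by
      rw [(indepFun_iff_map_prod_eq_prod_map_map (hmeas i).aemeasurable
        (hmeas j).aemeasurable).1 hindep, hdist i, hdist j]
    have hsm : StronglyMeasurable
        (fun p : 𝒳 × 𝒳 => (inner ℝ (g p.1 - μH) (g p.2 - μH) : ℝ)) :=
      ((hg.comp_measurable measurable_fst).sub stronglyMeasurable_const).inner
        ((hg.comp_measurable measurable_snd).sub stronglyMeasurable_const)
    have hbd1 : ∀ᵐ p : 𝒳 × 𝒳 ∂(P.prod P), ‖g p.1‖ ≤ C :=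
      MeasureTheory.Measure.quasiMeasurePreserving_fst.tendsto_ae.eventually hgbd
    have hbd2 : ∀ᵐ p : 𝒳 × 𝒳 ∂(P.prod P), ‖g p.2‖ ≤ C :=
      MeasureTheory.Measure.quasiMeasurePreserving_snd.tendsto_ae.eventually hgbd
    have hintp : Integrable
        (fun p : 𝒳 × 𝒳 => (inner ℝ (g p.1 - μH) (g p.2 - μH) : ℝ)) (P.prod P) := by
      refine (integrable_const ((2 * C) * (2 * C))).mono' hsm.aestronglyMeasurable ?_
      filter_upwards [hbd1, hbd2] with p h1 h2
      calc ‖(inner ℝ (g p.1 - μH) (g p.2 - μH) : ℝ)‖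
          ≤ ‖g p.1 - μH‖ * ‖g p.2 - μH‖ := norm_inner_le_norm _ _
      _ ≤ (2 * C) * (2 * C) := by
          apply mul_le_mul _ _ (norm_nonneg _) (by positivity)
          · calc ‖g p.1 - μH‖ ≤ ‖g p.1‖ + ‖μH‖ := norm_sub_le _ _
            _ ≤ C + C := add_le_add h1 hμbd
            _ = 2 * C := by ring
          · calc ‖g p.2 - μH‖ ≤ ‖g p.2‖ + ‖μH‖ := norm_sub_le _ _
            _ ≤ C + C := add_le_add h2 hμbd
            _ = 2 * C := by ring
    have hgm : Integrable (fun y => g y - μH) P := hgint.sub (integrable_const _)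
    have hgm0 : ∫ y, (g y - μH) ∂P = 0 := by
      rw [integral_sub hgint (integrable_const _), hgI]
      simp
    have heq : ∫ ω, (inner ℝ (Y i ω) (Y j ω) : ℝ) ∂Pr
        = ∫ p : 𝒳 × 𝒳, (inner ℝ (g p.1 - μH) (g p.2 - μH) : ℝ) ∂(P.prod P) := by
      rw [← hmap, integral_map ((hmeas i).prodMk (hmeas j)).aemeasurable]
      rw [hmap]; exact hsm.aestronglyMeasurable
    rw [heq, integral_prod _ hintp]
    have hz : ∀ x, ∫ y, (inner ℝ (g x - μH) (g y - μH) : ℝ) ∂P = 0 := fun x => by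
      rw [integral_inner hgm, hgm0, inner_zero_right]
    simp [hz]
  -- diagonal terms
  have hdiag : ∀ i, ∫ ω, (inner ℝ (Y i ω) (Y i ω) : ℝ) ∂Pr ≤ 4 * B := by
    intro i
    calc ∫ ω, (inner ℝ (Y i ω) (Y i ω) : ℝ) ∂Pr ≤ ∫ _ω, 4 * B ∂Pr := by
          apply integral_mono_ae (hIPint i i) (integrable_const _)
          filter_upwards [hYbd i] with ω hω
          calc (inner ℝ (Y i ω) (Y i ω) : ℝ) = ‖Y i ω‖ ^ 2 := real_inner_self_eq_norm_sq _
          _ ≤ (2 * C) ^ 2 := by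
              apply pow_le_pow_left₀ (norm_nonneg _) hω
          _ = 4 * B := by rw [mul_pow, hCsq]; norm_num
    _ = 4 * B := by simp
  -- the sum
  set S : Ω → H := fun ω => ∑ i, Y i ω with hS
  have hSsm : StronglyMeasurable S := by
    apply Finset.stronglyMeasurable_fun_sum
    intro i _
    exact hYsm i
  have hSbd : ∀ᵐ ω ∂Pr, ‖S ω‖ ≤ n * (2 * C) := by
    filter_upwards [ae_all_iff.2 hYbd] with ω hω
    calc ‖S ω‖ ≤ ∑ i, ‖Y i ω‖ := norm_sum_le _ _
    _ ≤ ∑ _i : Fin n, (2 * C) := Finset.sum_le_sum fun i _ => hω i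
    _ = n * (2 * C) := by simp
  -- second moment of the sum
  have hSsq : ∫ ω, ‖S ω‖ ^ 2 ∂Pr ≤ 4 * n * B := by
    have hpt : ∀ ω, ‖S ω‖ ^ 2 = ∑ i, ∑ j, (inner ℝ (Y i ω) (Y j ω) : ℝ) := by
      intro ω
      rw [← real_inner_self_eq_norm_sq, hS]
      rw [sum_inner]
      exact Finset.sum_congr rfl fun i _ => inner_sum _ _ _
    calc ∫ ω, ‖S ω‖ ^ 2 ∂Pr = ∑ i, ∑ j, ∫ ω, (inner ℝ (Y i ω) (Y j ω) : ℝ) ∂Pr := by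
          simp_rw [hpt]
          rw [integral_finset_sum _ fun i _ => integrable_finset_sum _ fun j _ => hIPint i j]
          exact Finset.sum_congr rfl fun i _ =>
            integral_finset_sum _ fun j _ => hIPint i j
    _ = ∑ i, ∫ ω, (inner ℝ (Y i ω) (Y i ω) : ℝ) ∂Pr := by
          apply Finset.sum_congr rfl
          intro i _
          rw [Finset.sum_eq_single i]
          · intro j _ hj; exact hcross i j (Ne.symm hj)
          · intro h; exact absurd (Finset.mem_univ i) h
    _ ≤ ∑ _i : Fin n, 4 * B := Finset.sum_le_sum fun i _ => hdiag i
    _ = 4 * n * B := by simp; ring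
  -- first moment via Cauchy-Schwarz
  have hSnorm_int : Integrable (fun ω => ‖S ω‖) Pr :=
    (integrable_const (n * (2 * C))).mono' hSsm.norm.aestronglyMeasurable
      (hSbd.mono fun ω hω => by simpa using hω)
  have hSsq_int : Integrable (fun ω => ‖S ω‖ ^ 2) Pr := by
    refine (integrable_const ((n * (2 * C)) ^ 2)).mono'
      (hSsm.norm.pow 2).aestronglyMeasurable ?_
    filter_upwards [hSbd] with ω hω
    have : ‖S ω‖ ^ 2 ≤ (n * (2 * C)) ^ 2 := pow_le_pow_left₀ (norm_nonneg _) hω 2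
    simpa [abs_of_nonneg (sq_nonneg ‖S ω‖)] using this
  have hCS : ∫ ω, ‖S ω‖ ∂Pr ≤ Real.sqrt (∫ ω, ‖S ω‖ ^ 2 ∂Pr) := by
    have hmem : MemLp (fun ω => ‖S ω‖) 2 Pr :=
      MemLp.of_bound hSsm.norm.aestronglyMeasurable _
        (hSbd.mono fun ω hω => by simpa using hω)
    have hvar := variance_nonneg (fun ω => ‖S ω‖) Pr
    rw [variance_eq_sub hmem] at hvar
    have h2 : (∫ ω, ‖S ω‖ ∂Pr) ^ 2 ≤ ∫ ω, ‖S ω‖ ^ 2 ∂Pr := by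
      have := sub_nonneg.1 hvar
      simpa [Pi.pow_apply] using this
    calc ∫ ω, ‖S ω‖ ∂Pr = Real.sqrt ((∫ ω, ‖S ω‖ ∂Pr) ^ 2) :=
          (Real.sqrt_sq (integral_nonneg fun ω => norm_nonneg _)).symm
    _ ≤ Real.sqrt (∫ ω, ‖S ω‖ ^ 2 ∂Pr) := Real.sqrt_le_sqrt h2
  -- rewrite the integrand
  have hfgX : ∀ i, ∀ᵐ ω ∂Pr, φ (X i ω) = g (X i ω) := fun i => by
    have h : ∀ᵐ y ∂(Measure.map (X i) Pr), φ y = g y := by rw [hdist i]; exact hfg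
    exact ae_of_ae_map (hmeas i).aemeasurable h
  have hn' : (n : ℝ) ≠ 0 := Nat.cast_ne_zero.2 hn.ne'
  have hrw : ∀ᵐ ω ∂Pr, ‖(n : ℝ)⁻¹ • ∑ i, φ (X i ω) - μH‖ = (n : ℝ)⁻¹ * ‖S ω‖ := by
    filter_upwards [ae_all_iff.2 hfgX] with ω hω
    have h1 : (∑ i, φ (X i ω)) = ∑ i, g (X i ω) :=
      Finset.sum_congr rfl fun i _ => hω i
    have h2 : (n : ℝ)⁻¹ • ∑ i, φ (X i ω) - μH = (n : ℝ)⁻¹ • S ω := by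
      rw [h1, hS]
      simp only [Y, Finset.sum_sub_distrib, Finset.sum_const, Finset.card_univ,
        Fintype.card_fin, smul_sub]
      rw [← Nat.cast_smul_eq_nsmul ℝ n μH, smul_smul, inv_mul_cancel₀ hn', one_smul]
    rw [h2, norm_smul]
    simp [abs_of_nonneg (by positivity : (0:ℝ) ≤ ((n:ℝ))⁻¹)]
  -- final computation
  calc (∫ ω, ‖(n : ℝ)⁻¹ • ∑ i, φ (X i ω) - μH‖ ∂Pr)
      = ∫ ω, (n : ℝ)⁻¹ * ‖S ω‖ ∂Pr := integral_congr_ae hrw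
  _ = (n : ℝ)⁻¹ * ∫ ω, ‖S ω‖ ∂Pr := integral_const_mul _ _
  _ ≤ (n : ℝ)⁻¹ * Real.sqrt (∫ ω, ‖S ω‖ ^ 2 ∂Pr) := by
      apply mul_le_mul_of_nonneg_left hCS (by positivity)
  _ ≤ (n : ℝ)⁻¹ * Real.sqrt (4 * n * B) := by
      apply mul_le_mul_of_nonneg_left (Real.sqrt_le_sqrt hSsq) (by positivity)
  _ = 2 * Real.sqrt (B / n) := by
      have hsn : (0:ℝ) < Real.sqrt n := Real.sqrt_pos.2 (by exact_mod_cast hn)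
      have hnn : Real.sqrt n * Real.sqrt n = (n : ℝ) :=
        Real.mul_self_sqrt (Nat.cast_nonneg n)
      have h4 : Real.sqrt (4 * n * B) = 2 * Real.sqrt n * Real.sqrt B := by
        rw [show (4 : ℝ) * n * B = (2 * Real.sqrt n) ^ 2 * B by
            rw [mul_pow, Real.sq_sqrt (Nat.cast_nonneg n)]; ring,
          Real.sqrt_mul (by positivity), Real.sqrt_sq (by positivity)]
      rw [h4, Real.sqrt_div hB]
      rw [mul_div_assoc', eq_div_iff hsn.ne']
      field_simp
      linear_combination Real.sqrt B * hnn
end
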